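/- arXiv:1708.00188 — 2 statements merged into one kernel-verified Lean document; each statement's English description precedes it below -/
import Mathlib

section
/- For a connected graph G and a connected graph H, if D̃ is an outer-connected dominating set of G, then T = D̃ × V(H) is an outer-connected dominating set of the Cartesian product G □ H; consequently γ̃c(G □ H) ≤ γ̃c(G) · |V(H)|. -/
open SimpleGraph

/-- `S` is a dominating set of `G`. -/
def IsDomSet {α : Type*} (G : SimpleGraph α) (S : Set α) : Prop :=
  ∀ v, v ∉ S → ∃ u ∈ S, G.Adj u v

/-- `S` is an outer-connected dominating set of `G`: it dominates `G` and the
subgraph induced on the complement of `S` is connected. -/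
def IsOCDomSet {α : Type*} (G : SimpleGraph α) (S : Set α) : Prop :=
  IsDomSet G S ∧ (G.induce (Sᶜ : Set α)).Connected

/-- `S` is a total dominating set of `G`. -/
def IsTotalDomSet {α : Type*} (G : SimpleGraph α) (S : Set α) : Prop :=
  ∀ v, ∃ u ∈ S, G.Adj u v

/-- The domination number `γ(G)`. -/
noncomputable def domNum {α : Type*} (G : SimpleGraph α) : ℕ :=
  sInf {n | ∃ S : Set α, IsDomSet G S ∧ S.ncard = n}

/-- The outer-connected domination number `γ̃c(G)`. -/
noncomputable def ocDomNum {α : Type*} (G : SimpleGraph α) : ℕ :=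
  sInf {n | ∃ S : Set α, IsOCDomSet G S ∧ S.ncard = n}

/-- The total domination number `γ_t(G)`. -/
noncomputable def totalDomNum {α : Type*} (G : SimpleGraph α) : ℕ :=
  sInf {n | ∃ S : Set α, IsTotalDomSet G S ∧ S.ncard = n}

/-- The minimum degree `δ(G)`. -/
noncomputable def minDeg {α : Type*} (G : SimpleGraph α) : ℕ :=
  sInf {d | ∃ v, (G.neighborSet v).ncard = d}

/-- The lexicographic product `G ∘ H`. -/
def lexProd {α β : Type*} (G : SimpleGraph α) (H : SimpleGraph β) :
    SimpleGraph (α × β) where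
  Adj x y := G.Adj x.1 y.1 ∨ (x.1 = y.1 ∧ H.Adj x.2 y.2)
  symm := by
    constructor
    rintro x y (h | ⟨h1, h2⟩)
    · exact Or.inl h.symm
    · exact Or.inr ⟨h1.symm, h2.symm⟩
  loopless := by
    constructor
    rintro x (h | ⟨_, h⟩)
    · exact G.loopless.irrefl _ h
    · exact H.loopless.irrefl _ h

/-- The corona product `G ∘c H`: one copy of `G` and, for each vertex `x` of `G`,
a copy of `H` whose vertices are all joined to `x`. -/
def corona {α β : Type*} (G : SimpleGraph α) (H : SimpleGraph β) :
    SimpleGraph (α ⊕ α × β) where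
  Adj x y :=
    match x, y with
    | Sum.inl a, Sum.inl b => G.Adj a b
    | Sum.inl a, Sum.inr (b, _) => a = b
    | Sum.inr (a, _), Sum.inl b => a = b
    | Sum.inr (a, u), Sum.inr (b, v) => a = b ∧ H.Adj u v
  symm := by
    constructor
    rintro (a | ⟨a, u⟩) (b | ⟨b, v⟩) h
    · exact G.adj_symm h
    · exact h.symm
    · exact h.symm
    · exact ⟨h.1.symm, h.2.symm⟩
  loopless := by
    constructor
    rintro (a | ⟨a, u⟩) h
    · exact G.loopless.irrefl a h
    · exact H.loopless.irrefl u h.2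

/-- The direct (tensor) product of the complete graphs `K_{n 0}, …, K_{n (t-1)}`:
two `t`-tuples are adjacent iff they differ in every coordinate. -/
def directProdComplete (t : ℕ) (n : Fin t → ℕ) :
    SimpleGraph (∀ i : Fin t, Fin (n i)) where
  Adj x y := x ≠ y ∧ ∀ i, x i ≠ y i
  symm := by
    constructor
    rintro x y ⟨h1, h2⟩
    exact ⟨h1.symm, fun i => (h2 i).symm⟩
  loopless := ⟨fun x h => h.1 rfl⟩


lemma aux_mem_compl {α β : Type*} {D : Set α} {x : α × β}
    (h : x ∈ (D ×ˢ (Set.univ : Set β))ᶜ) : x.1 ∈ Dᶜ :=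
  fun hx => h ⟨hx, trivial⟩

/-- Iso between the induced complement and a box product. -/
def auxIso {α β : Type*} (G : SimpleGraph α) (H : SimpleGraph β) (D : Set α) :
    (G.boxProd H).induce ((D ×ˢ (Set.univ : Set β))ᶜ) ≃g (G.induce (Dᶜ)).boxProd H where
  toFun := fun x => (⟨x.1.1, aux_mem_compl x.2⟩, x.1.2)
  invFun := fun x => ⟨(x.1.1, x.2), fun h => x.1.2 h.1⟩
  left_inv := fun x => rfl
  right_inv := fun x => rfl
  map_rel_iff' := by
    rintro ⟨⟨a, b⟩, hx⟩ ⟨⟨c, d⟩, hy⟩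
    simp only [Equiv.coe_fn_mk, SimpleGraph.boxProd_adj, SimpleGraph.comap_adj,
      Function.Embedding.coe_subtype, Subtype.mk_eq_mk]

lemma aux_oc {α β : Type*} (G : SimpleGraph α) (H : SimpleGraph β)
    (hH : H.Connected) (D : Set α) (hD : IsOCDomSet G D) :
    IsOCDomSet (G.boxProd H) (D ×ˢ (Set.univ : Set β)) := by
  constructor
  · rintro ⟨a, b⟩ hv
    have ha : a ∉ D := fun h => hv ⟨h, trivial⟩
    obtain ⟨u, hu, hadj⟩ := hD.1 a ha
    exact ⟨(u, b), ⟨hu, trivial⟩, Or.inl ⟨hadj, rfl⟩⟩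
  · exact ((auxIso G H D).connected_iff).mpr
      (hD.2.boxProd hH)

/-- If `D̃` is an outer-connected dominating set of `G`, then `D̃ × V(H)` is an
outer-connected dominating set of `G □ H`; consequently
`γ̃c(G □ H) ≤ γ̃c(G) · |V(H)|`. -/
theorem stmt_17 {α β : Type*} [Fintype α] [Fintype β]
    (G : SimpleGraph α) (H : SimpleGraph β)
    (hG : G.Connected) (hH : H.Connected)
    (D : Set α) (hD : IsOCDomSet G D) :
    IsOCDomSet (G.boxProd H) (D ×ˢ (Set.univ : Set β)) ∧
    ocDomNum (G.boxProd H) ≤ ocDomNum G * Fintype.card β := by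
  refine ⟨aux_oc G H hH D hD, ?_⟩
  have hne : {n | ∃ S : Set α, IsOCDomSet G S ∧ S.ncard = n}.Nonempty :=
    ⟨D.ncard, D, hD, rfl⟩
  obtain ⟨S, hS, hScard⟩ := Nat.sInf_mem hne
  have hT := aux_oc G H hH S hS
  have hcard : (S ×ˢ (Set.univ : Set β)).ncard = ocDomNum G * Fintype.card β := by
    classical
    rw [Set.ncard_eq_toFinset_card', Set.toFinset_prod, Finset.card_product,
      ← Set.ncard_eq_toFinset_card', ← Set.ncard_eq_toFinset_card', hScard,
      Set.ncard_univ, Nat.card_eq_fintype_card]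
    rfl
  exact Nat.sInf_le ⟨S ×ˢ (Set.univ : Set β), hT, hcard⟩
end

section
/- Let G = K_{n_1} × K_{n_2} × ⋯ × K_{n_t} be the direct product of complete graphs with t ≥ 3 and n_i ≥ t + 1 for all i. Then γ̃c(G) = t + 1; in particular, the set of 'constant' vertices {(j, j, …, j) : 0 ≤ j ≤ t} is a minimum outer-connected dominating set. -/
open SimpleGraph

lemma exists_avoid {m : ℕ} (f : Finset ℕ) (h : f.card < m) : ∃ w : Fin m, (w : ℕ) ∉ f := by
  by_contra hc
  push_neg at hc
  have hsub : Finset.range m ⊆ f := fun a ha => hc ⟨a, Finset.mem_range.mp ha⟩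
  have := Finset.card_le_card hsub
  simp at this
  omega

lemma dom_lower (t : ℕ) (ht : 3 ≤ t) (n : Fin t → ℕ) (hn : ∀ i, t + 1 ≤ n i)
    (S : Set (∀ i : Fin t, Fin (n i))) (hS : IsDomSet (directProdComplete t n) S) :
    t + 1 ≤ S.ncard := by
  classical
  by_contra hlt
  push_neg at hlt
  have hle : S.ncard ≤ t := by omega
  have hpos : ∀ i, 0 < n i := fun i => lt_of_lt_of_le (by omega) (hn i)
  obtain ⟨s0, hs0⟩ : S.Nonempty := by
    rcases S.eq_empty_or_nonempty with h | h
    · exfalso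
      obtain ⟨u, hu, _⟩ := hS (fun i => ⟨0, hpos i⟩) (by simp [h])
      simp [h] at hu
    · exact h
  have hSfin : S.Finite := Set.toFinite S
  set s : Finset _ := hSfin.toFinset with hs
  have hcard : s.card ≤ t := by
    rw [hs, ← Set.ncard_eq_toFinset_card _ hSfin]
    exact hle
  set d : Fin t → (∀ i : Fin t, Fin (n i)) :=
    fun j => if h : (j : ℕ) < s.card then (s.equivFin.symm ⟨j, h⟩ : _) else s0 with hd
  have hrange : ∀ x ∈ S, ∃ j : Fin t, d j = x := by
    intro x hx
    have hxs : x ∈ s := hSfin.mem_toFinset.mpr hx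
    set k := s.equivFin ⟨x, hxs⟩ with hk
    have hks : (k : ℕ) < s.card := k.isLt
    refine ⟨⟨k, lt_of_lt_of_le hks hcard⟩, ?_⟩
    have h1 : ((⟨(k : ℕ), lt_of_lt_of_le hks hcard⟩ : Fin t) : ℕ) < s.card := hks
    rw [hd]
    simp only [dif_pos h1]
    have h2 : (⟨((⟨(k : ℕ), lt_of_lt_of_le hks hcard⟩ : Fin t) : ℕ), h1⟩ : Fin s.card) = k := rfl
    rw [h2, hk, Equiv.symm_apply_apply]
  set v0 : ∀ i : Fin t, Fin (n i) := fun i => d i i with hv0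
  by_cases hmem : ∃ k, d k = v0
  · obtain ⟨k, hk⟩ := hmem
    have hcim : (Finset.image (fun j : Fin t => ((d j k : Fin (n k)) : ℕ)) Finset.univ).card ≤ t :=
      le_trans Finset.card_image_le (by simp)
    obtain ⟨b, hb⟩ := exists_avoid
      (Finset.image (fun j : Fin t => ((d j k : Fin (n k)) : ℕ)) Finset.univ)
      (lt_of_le_of_lt hcim (show t < n k by have := hn k; omega))
    have hbne : ∀ j, b ≠ d j k := by
      intro j he
      exact hb (Finset.mem_image.mpr ⟨j, Finset.mem_univ j, by rw [← he]⟩)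
    set v := Function.update v0 k b with hv
    have hvk : v k = b := Function.update_self k b v0
    have hvS : v ∉ S := by
      intro hvS
      obtain ⟨j, hj⟩ := hrange v hvS
      have : d j k = b := by rw [hj, hvk]
      exact hbne j this.symm
    obtain ⟨u, huS, hadj⟩ := hS v hvS
    obtain ⟨j, hj⟩ := hrange u huS
    by_cases hjk : j = k
    · subst hjk
      have : Nontrivial (Fin t) := Fin.nontrivial_iff_two_le.mpr (by omega)
      obtain ⟨i, hij⟩ := exists_ne j
      have hvi : v i = u i := by
        rw [hv, Function.update_of_ne hij, ← hj, hk]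
      exact hadj.2 i hvi.symm
    · have hvj : v j = u j := by
        rw [hv, Function.update_of_ne hjk, ← hj]
      exact hadj.2 j hvj.symm
  · have hvS : v0 ∉ S := fun h => hmem (hrange v0 h)
    obtain ⟨u, huS, hadj⟩ := hS v0 hvS
    obtain ⟨j, hj⟩ := hrange u huS
    exact hadj.2 j (by rw [← hj])

/-- For the direct product `G = K_{n₁} × ⋯ × K_{n_t}` with `t ≥ 3` and each
`n_i ≥ t + 1`, we have `γ̃c(G) = t + 1`, and the set of constant tuples
`{(j,…,j) : 0 ≤ j ≤ t}` is a minimum outer-connected dominating set. -/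
theorem stmt_19 (t : ℕ) (ht : 3 ≤ t) (n : Fin t → ℕ) (hn : ∀ i, t + 1 ≤ n i) :
    ocDomNum (directProdComplete t n) = t + 1 ∧
    IsOCDomSet (directProdComplete t n)
      {x : ∀ i : Fin t, Fin (n i) | ∃ j ≤ t, ∀ i, (x i : ℕ) = j} ∧
    {x : ∀ i : Fin t, Fin (n i) | ∃ j ≤ t, ∀ i, (x i : ℕ) = j}.ncard = t + 1 := by
  classical
  set G := directProdComplete t n with hG
  set S := {x : ∀ i : Fin t, Fin (n i) | ∃ j ≤ t, ∀ i, (x i : ℕ) = j} with hSdef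
  set c : Fin (t+1) → (∀ i : Fin t, Fin (n i)) :=
    fun j i => ⟨(j : ℕ), lt_of_lt_of_le j.isLt (hn i)⟩ with hc
  set i0 : Fin t := ⟨0, by omega⟩ with hi0
  set i1 : Fin t := ⟨1, by omega⟩ with hi1
  have hi01 : i0 ≠ i1 := by simp [hi0, hi1, Fin.ext_iff]
  have hSr : S = Set.range c := by
    ext x
    constructor
    · rintro ⟨j, hj, hx⟩
      exact ⟨⟨j, by omega⟩, funext fun i => Fin.ext (by simp [hc, hx i])⟩
    · rintro ⟨j, rfl⟩
      exact ⟨(j : ℕ), by omega, fun i => rfl⟩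
  have hcinj : Function.Injective c := by
    intro a b hab
    have := congrFun hab i0
    exact Fin.ext (by simpa [hc, Fin.ext_iff] using this)
  have hncard : S.ncard = t + 1 := by
    rw [hSr, ← Set.image_univ, Set.ncard_image_of_injective _ hcinj, Set.ncard_univ]
    simp
  have hdom : IsDomSet G S := by
    intro v hv
    have hcim : (Finset.image (fun i : Fin t => ((v i : ℕ))) Finset.univ).card ≤ t :=
      le_trans Finset.card_image_le (by simp)
    obtain ⟨j, hj⟩ := exists_avoid (Finset.image (fun i : Fin t => ((v i : ℕ))) Finset.univ)
      (lt_of_le_of_lt hcim (show t < t + 1 by omega))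
    refine ⟨c j, by rw [hSr]; exact ⟨j, rfl⟩, ?_, ?_⟩
    · intro he
      exact hj (Finset.mem_image.mpr ⟨i0, Finset.mem_univ i0, by rw [← he]⟩)
    · intro i he
      exact hj (Finset.mem_image.mpr ⟨i, Finset.mem_univ i, by rw [← he]⟩)
  have hnotS : ∀ (x : ∀ i : Fin t, Fin (n i)), (x i0 : ℕ) ≠ (x i1 : ℕ) → x ∉ S := by
    intro x hx ⟨j, hj, hall⟩
    exact hx ((hall i0).trans (hall i1).symm)
  have hstep : ∀ x y : (∀ i : Fin t, Fin (n i)),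
      ∃ z, z ∉ S ∧ (∀ i, z i ≠ x i) ∧ (∀ i, z i ≠ y i) := by
    intro x y
    have hch : ∀ i : Fin t, ∃ w : Fin (n i), (w : ℕ) ∉ ({(x i : ℕ), (y i : ℕ)} : Finset ℕ) := by
      intro i
      refine exists_avoid _ (lt_of_le_of_lt
        (show ({(x i : ℕ), (y i : ℕ)} : Finset ℕ).card ≤ 2 from
          le_trans (Finset.card_insert_le _ _) (by simp))
        (show 2 < n i by have := hn i; omega))
    choose z' hz' using hch
    obtain ⟨w0, hw0⟩ := exists_avoid
      ({(x i0 : ℕ), (y i0 : ℕ), ((z' i1 : Fin (n i1)) : ℕ)} : Finset ℕ)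
      (lt_of_le_of_lt
        (show ({(x i0 : ℕ), (y i0 : ℕ), ((z' i1 : Fin (n i1)) : ℕ)} : Finset ℕ).card ≤ 3 from
          le_trans (Finset.card_insert_le _ _) (by
            have := Finset.card_insert_le ((y i0 : ℕ)) ({((z' i1 : Fin (n i1)) : ℕ)} : Finset ℕ)
            simp at this ⊢
            omega))
        (show 3 < n i0 by have := hn i0; omega))
    set z := Function.update z' i0 w0 with hz
    have hz0 : z i0 = w0 := Function.update_self i0 w0 z'
    have hz1 : z i1 = z' i1 := Function.update_of_ne (Ne.symm hi01) w0 z'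
    refine ⟨z, ?_, ?_, ?_⟩
    · apply hnotS
      rw [hz0, hz1]
      intro he
      exact hw0 (by simp [he])
    · intro i
      by_cases hii : i = i0
      · subst hii
        rw [hz0]
        intro he
        exact hw0 (by rw [he]; simp)
      · rw [hz, Function.update_of_ne hii]
        intro he
        exact hz' i (by rw [he]; simp)
    · intro i
      by_cases hii : i = i0
      · subst hii
        rw [hz0]
        intro he
        exact hw0 (by rw [he]; simp)
      · rw [hz, Function.update_of_ne hii]
        intro he
        exact hz' i (by rw [he]; simp)
  have hconn : (G.induce (Sᶜ : Set _)).Connected := by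
    have hne : ∀ (z w : ∀ i : Fin t, Fin (n i)), (∀ i, z i ≠ w i) → z ≠ w := by
      intro z w h he
      exact h i0 (congrFun he i0)
    haveI : Nonempty ↥(Sᶜ : Set ((i : Fin t) → Fin (n i))) := by
      refine ⟨⟨fun i => ⟨if (i : ℕ) = 0 then 0 else 1, by have := hn i; split <;> omega⟩, ?_⟩⟩
      simp only [Set.mem_compl_iff]
      apply hnotS
      simp [hi0, hi1]
    constructor
    rintro ⟨x, hx⟩ ⟨y, hy⟩
    obtain ⟨z, hzS, hzx, hzy⟩ := hstep x y
    have hzc : z ∈ (Sᶜ : Set ((i : Fin t) → Fin (n i))) := Set.mem_compl_iff _ _ |>.mpr hzS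
    have h1 : (G.induce (Sᶜ : Set _)).Adj ⟨x, hx⟩ ⟨z, hzc⟩ :=
      ⟨(hne z x hzx).symm, fun i he => hzx i he.symm⟩
    have h2 : (G.induce (Sᶜ : Set _)).Adj ⟨z, hzc⟩ ⟨y, hy⟩ :=
      ⟨hne z y hzy, hzy⟩
    exact h1.reachable.trans h2.reachable
  have hOC : IsOCDomSet G S := ⟨hdom, hconn⟩
  have hmem : t + 1 ∈ {m | ∃ S' : Set (∀ i : Fin t, Fin (n i)), IsOCDomSet G S' ∧ S'.ncard = m} :=
    ⟨S, hOC, hncard⟩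
  refine ⟨le_antisymm (Nat.sInf_le hmem) ?_, hOC, hncard⟩
  have hmem2 := Nat.sInf_mem (⟨t + 1, hmem⟩ :
    Set.Nonempty {m | ∃ S' : Set (∀ i : Fin t, Fin (n i)), IsOCDomSet G S' ∧ S'.ncard = m})
  obtain ⟨S', hS', hc'⟩ := hmem2
  rw [ocDomNum, ← hc']
  exact dom_lower t ht n hn S' hS'.1
end
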